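/- Let E, the multiplications (A,λ) ↦ A·λ and (λ,A) ↦ λ·A by symmetric matrices, the strongly continuous semigroup (S_t), the bounded linear map β : E → 𝕊^d, and κ : (0,∞) → E with S_t κ(s) = κ(t+s) and ∫₀ᵗ ‖κ(s)‖² ds < ∞ be as in the mild Volterra setting, and for λ₀ ∈ E let (λ_t)_{t≥0} denote the unique continuous mild solution of λ_t = S_t λ₀ + ∫₀ᵗ ( κ(t−s)·β(λ_s) + β(λ_s)·κ(t−s) ) ds. Suppose C ⊆ E is a closed convex cone such that S_t(C) ⊆ C for all t ≥ 0, κ(t) ∈ C for all t > 0, β(C) ⊆ 𝕊^d₊ (the positive semidefinite matrices), and μ·A + A·μ ∈ C for all μ ∈ C and A ∈ 𝕊^d₊. Then the solution leaves C invariant: λ₀ ∈ C implies λ_t ∈ C for all t ≥ 0. -/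

import Mathlib

open scoped ENNReal NNReal Matrix
open Filter Set MeasureTheory

noncomputable section

attribute [local instance] Matrix.frobeniusNormedAddCommGroup Matrix.frobeniusNormedSpace

/-- The space `𝕊^d` of symmetric `d × d` real matrices; via the ambient Frobenius norm it
carries the norm `‖u‖ = √(Tr(u²))`. -/
def symMat (d : ℕ) : Submodule ℝ (Matrix (Fin d) (Fin d) ℝ) where
  carrier := {A | A.IsSymm}
  add_mem' := by
    intro A B hA hB
    show (A + B).IsSymm
    rw [Matrix.IsSymm] at *
    rw [Matrix.transpose_add, hA, hB]
  zero_mem' := by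
    show (0 : Matrix (Fin d) (Fin d) ℝ).IsSymm
    rw [Matrix.IsSymm, Matrix.transpose_zero]
  smul_mem' := by
    intro c A hA
    show (c • A).IsSymm
    rw [Matrix.IsSymm] at *
    rw [Matrix.transpose_smul, hA]

/-- A continuous mild solution of the lifted deterministic Volterra equation
`λ_t = S_t λ₀ + ∫₀ᵗ ( κ(t-s)·β(λ_s) + β(λ_s)·κ(t-s) ) ds`, where `mulL` and `mulR`
denote left and right multiplication of elements of `E` by symmetric matrices. -/
def IsMildSol {d : ℕ} {E : Type*} [NormedAddCommGroup E] [NormedSpace ℝ E]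
    (mulL : ↥(symMat d) →L[ℝ] E →L[ℝ] E) (mulR : E →L[ℝ] ↥(symMat d) →L[ℝ] E)
    (S : ℝ → E →L[ℝ] E) (β : E →L[ℝ] ↥(symMat d)) (κ : ℝ → E)
    (x₀ : E) (lam : ℝ → E) : Prop :=
  ContinuousOn lam (Ici 0) ∧ lam 0 = x₀ ∧
  ∀ t : ℝ, 0 ≤ t →
    lam t = S t x₀ +
      ∫ s in Ioc (0 : ℝ) t, (mulR (κ (t - s)) (β (lam s)) + mulL (β (lam s)) (κ (t - s)))

section Aux
open Metric Pointwise

lemma cone_separation {E : Type*} [NormedAddCommGroup E] [NormedSpace ℝ E]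
    {C : Set E} (hconv : Convex ℝ C) (h0 : (0:E) ∈ C)
    (hcone : ∀ c : ℝ, 0 ≤ c → ∀ x ∈ C, c • x ∈ C)
    (x : E) (r : ℝ) (hr : 0 < r) (hrx : r < infDist x C) :
    ∃ g : E →L[ℝ] ℝ, ‖g‖ ≤ 1 ∧ (∀ c ∈ C, g c ≤ 0) ∧ r ≤ g x := by
  set r₁ : ℝ := (r + infDist x C) / 2 with hr₁def
  have hrr₁ : r < r₁ := by rw [hr₁def]; linarith
  have hr₁x : r₁ < infDist x C := by rw [hr₁def]; linarith
  have hr₁ : 0 < r₁ := hr.trans hrr₁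
  set s : Set E := C + ball (0:E) r₁ with hs
  have hsopen : IsOpen s := IsOpen.add_left (isOpen_ball)
  have hsconv : Convex ℝ s := hconv.add (convex_ball 0 r₁)
  have hxs : x ∉ s := by
    rintro ⟨c, hc, b, hb, rfl⟩
    have h1 : infDist (c + b) C ≤ dist (c + b) c := infDist_le_dist_of_mem hc
    rw [dist_eq_norm, add_sub_cancel_left] at h1
    have hbr : ‖b‖ < r₁ := by simpa [dist_eq_norm] using hb
    linarith
  obtain ⟨f, hf⟩ := geometric_hahn_banach_open_point hsconv hsopen hxs
  have hmem : ∀ c ∈ C, ∀ b ∈ ball (0:E) r₁, f (c + b) < f x := fun c hc b hb =>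
    hf _ (add_mem_add hc hb)
  have hfxpos : 0 < f x := by
    have := hmem 0 h0 0 (by simpa using hr₁)
    simpa using this
  have hfC : ∀ c ∈ C, f c ≤ 0 := by
    intro c hc
    by_contra h
    push_neg at h
    obtain ⟨n, hn⟩ := exists_nat_gt (f x / f c)
    have hnc : (n:ℝ) • c ∈ C := hcone n (Nat.cast_nonneg n) c hc
    have h2 := hmem _ hnc 0 (by simpa using hr₁)
    rw [add_zero, _root_.map_smul, smul_eq_mul] at h2
    have h3 := (div_lt_iff₀ h).mp hn
    linarith
  have hbd : ∀ y : E, ‖y‖ < r₁ → f y ≤ f x := by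
    intro y hy
    have := hmem 0 h0 y (by simpa [mem_ball, dist_eq_norm] using hy)
    have := this.le
    simpa using this
  have hnorm : ‖f‖ ≤ f x / r := by
    refine ContinuousLinearMap.opNorm_le_bound f (by positivity) ?_
    intro y
    rcases eq_or_ne y 0 with rfl | hy
    · simp
    · have hyn : 0 < ‖y‖ := norm_pos_iff.mpr hy
      have hz : ∀ z : E, ‖z‖ = r → f z ≤ f x := fun z hzr => hbd z (hzr ▸ hrr₁)
      have h1 : f ((r / ‖y‖) • y) ≤ f x := by
        refine hz _ ?_
        rw [norm_smul, Real.norm_eq_abs, abs_of_pos (by positivity), div_mul_cancel₀ _ hyn.ne']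
      have h2 : f ((r / ‖y‖) • (-y)) ≤ f x := by
        refine hz _ ?_
        rw [norm_smul, norm_neg, Real.norm_eq_abs, abs_of_pos (by positivity),
          div_mul_cancel₀ _ hyn.ne']
      rw [_root_.map_smul, smul_eq_mul] at h1
      rw [_root_.map_smul, map_neg, smul_eq_mul, mul_neg] at h2
      have hry : 0 < r / ‖y‖ := by positivity
      have habs : (r / ‖y‖) * |f y| ≤ f x := by
        rcases abs_cases (f y) with ⟨he, _⟩ | ⟨he, _⟩
        · rw [he]; exact h1
        · rw [he, mul_neg]; exact h2
      have h3 : r * |f y| ≤ f x * ‖y‖ := by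
        have h4 := mul_le_mul_of_nonneg_right habs hyn.le
        have h5 : r / ‖y‖ * |f y| * ‖y‖ = r * |f y| := by
          field_simp
        rw [h5] at h4
        exact h4
      rw [Real.norm_eq_abs, div_mul_eq_mul_div, le_div_iff₀ hr, mul_comm]
      exact h3
  refine ⟨(r / f x) • f, ?_, ?_, ?_⟩
  · calc ‖(r / f x) • f‖ = |r / f x| * ‖f‖ := by rw [norm_smul (r / f x) f, Real.norm_eq_abs]
      _ ≤ (r / f x) * (f x / r) := by
          rw [abs_of_pos (by positivity)]
          exact mul_le_mul_of_nonneg_left hnorm (by positivity)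
      _ = 1 := by field_simp
  · intro c hc
    have := hfC c hc
    simp only [ContinuousLinearMap.smul_apply, smul_eq_mul]
    exact mul_nonpos_of_nonneg_of_nonpos (by positivity) this
  · simp only [ContinuousLinearMap.smul_apply, smul_eq_mul]
    rw [div_mul_cancel₀ _ hfxpos.ne']

lemma gronwall_conv {T : ℝ} (hT : 0 < T) (k d : ℝ → ℝ)
    (hk0 : ∀ s, 0 ≤ k s)
    (hkint : IntegrableOn k (Ioc 0 T))
    (hd : ContinuousOn d (Icc 0 T)) (hd0 : ∀ s, 0 ≤ d s)
    (hint : ∀ t ∈ Icc (0:ℝ) T, IntegrableOn (fun s => k (t - s) * d s) (Ioc 0 t))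
    (hie : ∀ t ∈ Icc (0:ℝ) T, d t ≤ ∫ s in Ioc (0:ℝ) t, k (t - s) * d s) :
    ∀ t ∈ Icc (0:ℝ) T, d t = 0 := by
  have hanti : Antitone (fun n : ℕ => Ioc (0:ℝ) (T / (n+1))) := by
    intro n m hnm
    apply Ioc_subset_Ioc le_rfl
    apply div_le_div_of_nonneg_left hT.le (by positivity)
    exact_mod_cast by exact_mod_cast Nat.succ_le_succ hnm
  have hiInter : (⋂ n : ℕ, Ioc (0:ℝ) (T / (n+1))) = ∅ := by
    ext x
    simp only [mem_iInter, mem_Ioc, mem_empty_iff_false, iff_false, not_forall]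
    by_cases hx : 0 < x
    · obtain ⟨n, hn⟩ := exists_nat_gt (T / x)
      refine ⟨n, ?_⟩
      intro ⟨_, hle⟩
      have hn1 : T / x < (n:ℝ) + 1 := hn.trans (by linarith)
      rw [div_lt_iff₀ hx] at hn1
      rw [le_div_iff₀ (by positivity)] at hle
      nlinarith
    · exact ⟨0, fun h => hx h.1⟩
  have htend := tendsto_setIntegral_of_antitone
      (f := k) (μ := volume) (s := fun n : ℕ => Ioc (0:ℝ) (T / (n+1)))
      (fun n => measurableSet_Ioc) hanti ⟨0, by simpa using hkint⟩
  rw [hiInter] at htend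
  simp only [Measure.restrict_empty, integral_zero_measure] at htend
  have hev : ∀ᶠ n : ℕ in atTop, ∫ s in Ioc (0:ℝ) (T / (n+1)), k s < 1/2 := by
    have := htend (Iio_mem_nhds (by norm_num : (0:ℝ) < 1/2))
    filter_upwards [this] with n hn using hn
  obtain ⟨N, hN⟩ := hev.exists
  set δ : ℝ := T / (N+1) with hδdef
  have hNnn : (0:ℝ) ≤ N := Nat.cast_nonneg N
  have hδpos : 0 < δ := by positivity
  have hδT : δ ≤ T := by
    rw [hδdef, div_le_iff₀ (by positivity)]
    nlinarith
  have hkδ : ∀ u : ℝ, u ≤ δ → ∫ s in Ioc (0:ℝ) u, k s ≤ 1/2 := by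
    intro u hu
    have h1 : ∫ s in Ioc (0:ℝ) u, k s ≤ ∫ s in Ioc (0:ℝ) δ, k s := by
      apply setIntegral_mono_set (hkint.mono_set (Ioc_subset_Ioc le_rfl hδT))
      · exact Filter.Eventually.of_forall hk0
      · exact HasSubset.Subset.eventuallyLE (Ioc_subset_Ioc le_rfl hu)
    exact h1.trans hN.le
  have claim : ∀ n : ℕ, ∀ t ∈ Icc (0:ℝ) (min ((n:ℝ)*δ) T), d t = 0 := by
    intro n
    induction n with
    | zero =>
      intro t ht
      simp only [Nat.cast_zero, zero_mul, min_eq_left hT.le, Icc_self, mem_singleton_iff] at ht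
      subst ht
      have h1 := hie 0 ⟨le_rfl, hT.le⟩
      rw [Ioc_self, Measure.restrict_empty, integral_zero_measure] at h1
      exact le_antisymm h1 (hd0 0)
    | succ n ih =>
      set a : ℝ := min ((n:ℝ)*δ) T with hadef
      set b : ℝ := min (((n:ℝ)+1)*δ) T with hbdef
      have ha0 : 0 ≤ a := le_min (by positivity) hT.le
      have hab : a ≤ b := min_le_min (by nlinarith [hδpos.le]) le_rfl
      have hbT : b ≤ T := min_le_right _ _
      have hba : b - a ≤ δ := by
        rcases min_cases ((n:ℝ)*δ) T with ⟨h3,_⟩|⟨h3,h4⟩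
        · have hb' : b ≤ ((n:ℝ)+1)*δ := min_le_left _ _
          rw [hadef, h3]; nlinarith
        · rw [hadef, h3]; linarith
      suffices hsuf : ∀ t ∈ Icc a b, d t = 0 by
        intro t ht
        have ht' : t ∈ Icc (0:ℝ) b := by
          rw [hbdef]
          push_cast at ht ⊢
          exact ht
        rcases le_or_gt t a with h | h
        · exact ih t ⟨ht'.1, h⟩
        · exact hsuf t ⟨h.le, ht'.2⟩
      have hdcont : ContinuousOn d (Icc a b) := hd.mono (Icc_subset_Icc ha0 hbT)
      obtain ⟨tm, htm, htmax⟩ := isCompact_Icc.exists_isMaxOn (nonempty_Icc.mpr hab) hdcont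
      rcases le_or_gt (d tm) 0 with hm | hm
      · intro t ht
        exact le_antisymm ((htmax ht).trans hm) (hd0 t)
      exfalso
      have htmT : tm ≤ T := htm.2.trans hbT
      have htm0T : tm ∈ Icc (0:ℝ) T := ⟨ha0.trans htm.1, htmT⟩
      have h1 := hie tm htm0T
      have hsplit : Ioc (0:ℝ) tm = Ioc 0 a ∪ Ioc a tm := (Ioc_union_Ioc_eq_Ioc ha0 htm.1).symm
      have hint_tm := hint tm htm0T
      have hint1 : IntegrableOn (fun s => k (tm - s) * d s) (Ioc 0 a) :=
        hint_tm.mono_set (by rw [hsplit]; exact subset_union_left)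
      have hint2 : IntegrableOn (fun s => k (tm - s) * d s) (Ioc a tm) :=
        hint_tm.mono_set (by rw [hsplit]; exact subset_union_right)
      have heq : ∫ s in Ioc (0:ℝ) tm, k (tm - s) * d s
          = (∫ s in Ioc (0:ℝ) a, k (tm - s) * d s) + ∫ s in Ioc a tm, k (tm - s) * d s := by
        rw [hsplit]
        exact setIntegral_union (Ioc_disjoint_Ioc_of_le le_rfl) measurableSet_Ioc hint1 hint2
      have hz : ∫ s in Ioc (0:ℝ) a, k (tm - s) * d s = 0 := by
        rw [setIntegral_congr_fun measurableSet_Ioc (g := fun _ => (0:ℝ))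
          (fun s hs => by rw [ih s ⟨hs.1.le, hs.2⟩, mul_zero])]
        simp
      have hrefl : IntegrableOn (fun s => k (tm - s)) (Ioc a tm) := by
        have h0ta : (0:ℝ) ≤ tm - a := sub_nonneg.mpr htm.1
        have hii : IntervalIntegrable k volume 0 (tm - a) := by
          rw [intervalIntegrable_iff_integrableOn_Ioc_of_le h0ta]
          exact hkint.mono_set (Ioc_subset_Ioc le_rfl (by linarith))
        have h2 := hii.comp_sub_left tm
        rw [sub_zero, sub_sub_cancel] at h2
        rw [← intervalIntegrable_iff_integrableOn_Ioc_of_le htm.1]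
        exact h2.symm
      have hmono : ∫ s in Ioc a tm, k (tm - s) * d s ≤ ∫ s in Ioc a tm, k (tm - s) * d tm := by
        apply setIntegral_mono_on hint2 (hrefl.mul_const _) measurableSet_Ioc
        intro s hs
        exact mul_le_mul_of_nonneg_left (htmax ⟨hs.1.le, hs.2.trans htm.2⟩) (hk0 _)
      have hval : ∫ s in Ioc a tm, k (tm - s) * d tm
          = (∫ s in Ioc a tm, k (tm - s)) * d tm := integral_mul_const _ _
      have hchange : ∫ s in Ioc a tm, k (tm - s) = ∫ s in Ioc (0:ℝ) (tm - a), k s := by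
        rw [← intervalIntegral.integral_of_le htm.1,
          ← intervalIntegral.integral_of_le (sub_nonneg.mpr htm.1),
          intervalIntegral.integral_comp_sub_left k tm, sub_self]
      have hhalf : ∫ s in Ioc (0:ℝ) (tm - a), k s ≤ 1/2 := hkδ _ (by linarith [htm.2])
      have hfin : d tm ≤ 1/2 * d tm := by
        calc d tm ≤ ∫ s in Ioc (0:ℝ) tm, k (tm - s) * d s := h1
          _ = (∫ s in Ioc a tm, k (tm - s) * d s) := by rw [heq, hz, zero_add]
          _ ≤ (∫ s in Ioc a tm, k (tm - s)) * d tm := hmono.trans (le_of_eq hval)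
          _ ≤ 1/2 * d tm := by
              rw [hchange]
              exact mul_le_mul_of_nonneg_right hhalf hm.le
      linarith
  intro t ht
  obtain ⟨n, hn⟩ := exists_nat_ge (T / δ)
  have hTn : T ≤ (n:ℝ) * δ := by
    rw [div_le_iff₀ hδpos] at hn
    linarith
  exact claim n t (by rwa [min_eq_right hTn])

end Aux

universe u

/-- **Cone invariance for the lifted linear Volterra equation.**  If the closed convex cone
`C` is invariant under the semigroup, `κ` takes values in `C`, `β` maps `C` into the
positive semidefinite matrices, and `μ·A + A·μ ∈ C` for `μ ∈ C` and `A` positive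
semidefinite, then mild solutions starting in `C` stay in `C`. -/
theorem volterra_cone_invariance
    {d : ℕ} {E : Type u} [NormedAddCommGroup E] [NormedSpace ℝ E] [CompleteSpace E]
    (mulL : ↥(symMat d) →L[ℝ] E →L[ℝ] E) (mulR : E →L[ℝ] ↥(symMat d) →L[ℝ] E)
    (hmulL : ∀ (A : ↥(symMat d)) (x : E), ‖mulL A x‖ ≤ ‖A‖ * ‖x‖)
    (hmulR : ∀ (x : E) (A : ↥(symMat d)), ‖mulR x A‖ ≤ ‖x‖ * ‖A‖)
    (S : ℝ → E →L[ℝ] E) (hS0 : S 0 = ContinuousLinearMap.id ℝ E)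
    (hSsg : ∀ s t : ℝ, 0 ≤ s → 0 ≤ t → S (s + t) = (S s).comp (S t))
    (hScont : ∀ x : E, ContinuousOn (fun t => S t x) (Ici 0))
    (β : E →L[ℝ] ↥(symMat d)) (κ : ℝ → E)
    (hκS : ∀ t s : ℝ, 0 < t → 0 < s → S t (κ s) = κ (t + s))
    (hκsq : ∀ t : ℝ, 0 < t → IntegrableOn (fun s => ‖κ s‖ ^ 2) (Ioc 0 t))
    (C : Set E) (hCclosed : IsClosed C) (hCconv : Convex ℝ C)
    (hCcone : ∀ c : ℝ, 0 ≤ c → ∀ x ∈ C, c • x ∈ C)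
    (hSC : ∀ t : ℝ, 0 ≤ t → ∀ x ∈ C, S t x ∈ C)
    (hκC : ∀ t : ℝ, 0 < t → κ t ∈ C)
    (hβC : ∀ x ∈ C, ((β x : Matrix (Fin d) (Fin d) ℝ)).PosSemidef)
    (hmulC : ∀ x ∈ C, ∀ A : ↥(symMat d), ((A : Matrix (Fin d) (Fin d) ℝ)).PosSemidef →
      mulR x A + mulL A x ∈ C) :
    ∀ (x₀ : E) (lam : ℝ → E), x₀ ∈ C → IsMildSol mulL mulR S β κ x₀ lam →
      ∀ t : ℝ, 0 ≤ t → lam t ∈ C := by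
  intro x₀ lam hx₀ hsol
  obtain ⟨hlamc, hlam0, hmild⟩ := hsol
  have h0C : (0:E) ∈ C := by simpa using hCcone 0 le_rfl x₀ hx₀
  have hCne : C.Nonempty := ⟨x₀, hx₀⟩
  have haddC : ∀ a ∈ C, ∀ b ∈ C, a + b ∈ C := by
    intro a ha b hb
    have hmid : (1/2 : ℝ) • a + (1/2 : ℝ) • b ∈ C :=
      hCconv ha hb (by norm_num) (by norm_num) (by norm_num)
    have h2 := hCcone 2 (by norm_num) _ hmid
    rwa [smul_add, smul_smul, smul_smul, show (2:ℝ) * (1/2) = 1 by norm_num, one_smul,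
      one_smul] at h2
  -- continuity of κ on (0,∞)
  have hκcont : ContinuousOn κ (Ioi 0) := by
    intro u hu
    have hu0 : (0:ℝ) < u := hu
    set s₀ : ℝ := u/2 with hs₀def
    have hs₀pos : 0 < s₀ := by positivity
    have hcont2 : ContinuousOn (fun v => S (v - s₀) (κ s₀)) (Ici s₀) := by
      apply (hScont (κ s₀)).comp ((continuous_id.sub continuous_const).continuousOn)
      intro v hv
      simpa [mem_Ici, sub_nonneg] using hv
    have heq : EqOn κ (fun v => S (v - s₀) (κ s₀)) (Ici s₀) := by
      intro v hv
      rcases eq_or_lt_of_le (mem_Ici.mp hv) with h | hlt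
      · simp only [← h, sub_self, hS0, ContinuousLinearMap.id_apply]
      · simp only
        rw [hκS (v - s₀) s₀ (by linarith) hs₀pos, sub_add_cancel]
    have hccc : ContinuousOn κ (Ici s₀) := hcont2.congr heq
    have hca : ContinuousAt κ u :=
      hccc.continuousAt (Ici_mem_nhds (by rw [hs₀def]; linarith))
    exact hca.continuousWithinAt
  -- the scalar kernel
  letI : NormedAddCommGroup (E →L[ℝ] ↥(symMat d)) := ContinuousLinearMap.toNormedAddCommGroup
  set K : ℝ := 2 * ‖β‖ with hKdef
  have hK0 : 0 ≤ K := by positivity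
  set k : ℝ → ℝ := fun s => K * ‖κ s‖ with hkdef
  have hk0 : ∀ s, 0 ≤ k s := fun s => by positivity
  have hkcont : ContinuousOn k (Ioi 0) := continuousOn_const.mul hκcont.norm
  have hkint : ∀ T : ℝ, 0 < T → IntegrableOn k (Ioc 0 T) := by
    intro T hT
    have hmeas : AEStronglyMeasurable k (volume.restrict (Ioc 0 T)) :=
      (hkcont.mono Ioc_subset_Ioi_self).aestronglyMeasurable measurableSet_Ioc
    refine Integrable.mono' ((integrable_const K).add ((hκsq T hT).const_mul K)) hmeas ?_
    refine Filter.Eventually.of_forall ?_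
    intro s
    rw [Real.norm_eq_abs, abs_of_nonneg (hk0 s)]
    have h1 : ‖κ s‖ ≤ 1 + ‖κ s‖^2 := by nlinarith [sq_nonneg (‖κ s‖ - 1), norm_nonneg (κ s)]
    calc K * ‖κ s‖ ≤ K * (1 + ‖κ s‖^2) := mul_le_mul_of_nonneg_left h1 hK0
      _ = K + K * ‖κ s‖^2 := by ring
  -- distance function
  set dd : ℝ → ℝ := fun s => Metric.infDist (lam s) C with hdddef
  have hddcont : ContinuousOn dd (Ici 0) :=
    (Metric.continuous_infDist_pt C).comp_continuousOn hlamc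
  have hdd0 : ∀ s, 0 ≤ dd s := fun s => Metric.infDist_nonneg
  have hdd00 : dd 0 = 0 := by
    simp only [hdddef, hlam0]
    exact Metric.infDist_zero_of_mem hx₀
  -- measurability of reflected κ
  have hκrefl_meas : ∀ t : ℝ, 0 < t →
      AEStronglyMeasurable (fun s => κ (t - s)) (volume.restrict (Ioc 0 t)) := by
    intro t ht
    have hco : ContinuousOn (fun s => κ (t - s)) (Ico 0 t) := by
      apply hκcont.comp ((continuous_const.sub continuous_id).continuousOn)
      intro s hs
      simp only [mem_Ico] at hs
      exact mem_Ioi.mpr (show (0:ℝ) < t - s by linarith [hs.2])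
    have h1 : AEStronglyMeasurable (fun s => κ (t - s)) (volume.restrict (Ico 0 t)) :=
      hco.aestronglyMeasurable measurableSet_Ico
    have hres : volume.restrict (Ioc (0:ℝ) t) = volume.restrict (Ico (0:ℝ) t) :=
      Measure.restrict_congr_set (Ioo_ae_eq_Ioc.symm.trans Ioo_ae_eq_Ico)
    rwa [hres]
  -- reflected kernel integrability
  have hkrefl : ∀ t : ℝ, 0 < t → IntegrableOn (fun s => k (t - s)) (Ioc 0 t) := by
    intro t ht
    have hii : IntervalIntegrable k volume 0 t :=
      (intervalIntegrable_iff_integrableOn_Ioc_of_le ht.le).mpr (hkint t ht)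
    have h2 := hii.comp_sub_left t
    rw [sub_zero, sub_self] at h2
    exact (intervalIntegrable_iff_integrableOn_Ioc_of_le ht.le).mp h2.symm
  -- continuity of the bilinear pairing
  have hφ : Continuous (fun p : E × ↥(symMat d) => mulR p.1 p.2 + mulL p.2 p.1) := by
    have h1 : Continuous (fun p : E × ↥(symMat d) => mulR p.1 p.2) :=
      mulR.isBoundedBilinearMap.continuous
    have h2 : Continuous (fun p : ↥(symMat d) × E => mulL p.1 p.2) :=
      mulL.isBoundedBilinearMap.continuous
    exact h1.add (h2.comp continuous_swap)
  -- integrability of the vector integrand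
  have hFint : ∀ t : ℝ, 0 < t → IntegrableOn
      (fun s => mulR (κ (t - s)) (β (lam s)) + mulL (β (lam s)) (κ (t - s))) (Ioc 0 t) := by
    intro t ht
    have hlam_meas : AEStronglyMeasurable lam (volume.restrict (Ioc 0 t)) :=
      (hlamc.mono (Ioc_subset_Icc_self.trans (Icc_subset_Ici_self))).aestronglyMeasurable
        measurableSet_Ioc
    have hβlam : AEStronglyMeasurable (fun s => β (lam s)) (volume.restrict (Ioc 0 t)) :=
      β.continuous.comp_aestronglyMeasurable hlam_meas
    have hFmeas : AEStronglyMeasurable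
        (fun s => mulR (κ (t - s)) (β (lam s)) + mulL (β (lam s)) (κ (t - s)))
        (volume.restrict (Ioc 0 t)) :=
      hφ.comp_aestronglyMeasurable ((hκrefl_meas t ht).prodMk hβlam)
    obtain ⟨M, hM⟩ := (isCompact_Icc (a := (0:ℝ)) (b := t)).exists_bound_of_continuousOn
      (hlamc.mono Icc_subset_Ici_self)
    have hM0 : 0 ≤ M := (norm_nonneg _).trans (hM 0 ⟨le_rfl, ht.le⟩)
    refine Integrable.mono' ((hkrefl t ht).mul_const M) hFmeas ?_
    refine (ae_restrict_iff' measurableSet_Ioc).mpr (Filter.Eventually.of_forall ?_)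
    intro s hs
    have hlsM : ‖lam s‖ ≤ M := hM s ⟨hs.1.le, hs.2⟩
    calc ‖mulR (κ (t - s)) (β (lam s)) + mulL (β (lam s)) (κ (t - s))‖
        ≤ ‖mulR (κ (t - s)) (β (lam s))‖ + ‖mulL (β (lam s)) (κ (t - s))‖ := norm_add_le _ _
      _ ≤ ‖κ (t - s)‖ * ‖β (lam s)‖ + ‖β (lam s)‖ * ‖κ (t - s)‖ :=
          add_le_add (hmulR _ _) (hmulL _ _)
      _ = 2 * ‖κ (t - s)‖ * ‖β (lam s)‖ := by ring
      _ ≤ 2 * ‖κ (t - s)‖ * (‖β‖ * ‖lam s‖) :=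
          mul_le_mul_of_nonneg_left (β.le_opNorm _) (by positivity)
      _ ≤ 2 * ‖κ (t - s)‖ * (‖β‖ * M) := by
          have := mul_le_mul_of_nonneg_left hlsM (norm_nonneg β)
          exact mul_le_mul_of_nonneg_left this (by positivity)
      _ = k (t - s) * M := by rw [hkdef]; simp only; rw [hKdef]; ring
  -- integrability of the scalar integrand
  have hkd_int : ∀ t : ℝ, 0 < t → IntegrableOn (fun s => k (t - s) * dd s) (Ioc 0 t) := by
    intro t ht
    have hddmeas : AEStronglyMeasurable dd (volume.restrict (Ioc 0 t)) :=
      (hddcont.mono (Ioc_subset_Icc_self.trans (Icc_subset_Ici_self))).aestronglyMeasurable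
        measurableSet_Ioc
    have hkmeas : AEStronglyMeasurable (fun s => k (t - s)) (volume.restrict (Ioc 0 t)) :=
      (hkrefl t ht).1
    obtain ⟨Md, hMd⟩ := (isCompact_Icc (a := (0:ℝ)) (b := t)).exists_bound_of_continuousOn
      (hddcont.mono Icc_subset_Ici_self)
    refine Integrable.mono' ((hkrefl t ht).mul_const Md) (hkmeas.mul hddmeas) ?_
    refine (ae_restrict_iff' measurableSet_Ioc).mpr (Filter.Eventually.of_forall ?_)
    intro s hs
    have h1 : ‖dd s‖ ≤ Md := hMd s ⟨hs.1.le, hs.2⟩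
    rw [Real.norm_eq_abs, abs_mul, abs_of_nonneg (hk0 _)]
    have h1' : |dd s| ≤ Md := by rwa [Real.norm_eq_abs] at h1
    exact mul_le_mul_of_nonneg_left h1' (hk0 _)
  -- the key inequality
  have keyineq : ∀ t : ℝ, 0 < t → dd t ≤ ∫ s in Ioc (0:ℝ) t, k (t - s) * dd s := by
    intro t ht
    set F : ℝ → E := fun s => mulR (κ (t - s)) (β (lam s)) + mulL (β (lam s)) (κ (t - s))
      with hFdef
    set I : E := ∫ s in Ioc (0:ℝ) t, F s with hIdef
    have hlamt : lam t = S t x₀ + I := hmild t ht.le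
    have hStx₀ : S t x₀ ∈ C := hSC t ht.le x₀ hx₀
    have hstep1 : dd t ≤ Metric.infDist I C := by
      by_contra hcon
      push_neg at hcon
      obtain ⟨y, hy, hdisty⟩ := (Metric.infDist_lt_iff hCne).mp hcon
      have hyC : S t x₀ + y ∈ C := haddC _ hStx₀ _ hy
      have h2 : dd t ≤ dist (lam t) (S t x₀ + y) := Metric.infDist_le_dist_of_mem hyC
      rw [hlamt, dist_eq_norm, add_sub_add_left_eq_sub, ← dist_eq_norm] at h2
      linarith
    set R : ℝ := ∫ s in Ioc (0:ℝ) t, k (t - s) * dd s with hRdef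
    have hR0 : 0 ≤ R :=
      setIntegral_nonneg measurableSet_Ioc (fun s _ => mul_nonneg (hk0 _) (hdd0 _))
    refine hstep1.trans ?_
    by_contra hcon
    push_neg at hcon
    set r : ℝ := (R + Metric.infDist I C)/2 with hrdef
    have hr0 : 0 < r := by rw [hrdef]; linarith
    have hrlt : r < Metric.infDist I C := by rw [hrdef]; linarith
    obtain ⟨g, hg1, hgC, hgr⟩ := cone_separation hCconv h0C hCcone I r hr0 hrlt
    have hgI : g I = ∫ s in Ioc (0:ℝ) t, g (F s) :=
      (ContinuousLinearMap.integral_comp_comm g (hFint t ht)).symm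
    have hae : ∀ s ∈ Ioo (0:ℝ) t, g (F s) ≤ k (t - s) * dd s := by
      intro s hs
      have hts : 0 < t - s := by linarith [hs.2]
      have hκC' : κ (t - s) ∈ C := hκC _ hts
      have hall : ∀ c ∈ C, g (F s) ≤ k (t - s) * dist (lam s) c := by
        intro c hc
        set G : E := mulR (κ (t - s)) (β c) + mulL (β c) (κ (t - s)) with hGdef
        have hGC : G ∈ C := hmulC _ hκC' (β c) (hβC c hc)
        have hdiff : F s - G
            = mulR (κ (t - s)) (β (lam s) - β c) + mulL (β (lam s) - β c) (κ (t - s)) := by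
          rw [hFdef, hGdef]
          simp only [map_sub, ContinuousLinearMap.sub_apply]
          abel
        have hnd : ‖F s - G‖ ≤ k (t - s) * ‖lam s - c‖ := by
          rw [hdiff]
          calc ‖mulR (κ (t - s)) (β (lam s) - β c) + mulL (β (lam s) - β c) (κ (t - s))‖
              ≤ ‖mulR (κ (t - s)) (β (lam s) - β c)‖ + ‖mulL (β (lam s) - β c) (κ (t - s))‖ :=
                norm_add_le _ _
            _ ≤ ‖κ (t - s)‖ * ‖β (lam s) - β c‖ + ‖β (lam s) - β c‖ * ‖κ (t - s)‖ :=
                add_le_add (hmulR _ _) (hmulL _ _)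
            _ = 2 * ‖κ (t - s)‖ * ‖β (lam s) - β c‖ := by ring
            _ ≤ 2 * ‖κ (t - s)‖ * (‖β‖ * ‖lam s - c‖) := by
                rw [← map_sub]
                exact mul_le_mul_of_nonneg_left (β.le_opNorm _) (by positivity)
            _ = k (t - s) * ‖lam s - c‖ := by rw [hkdef]; simp only; rw [hKdef]; ring
        have hsplitg : g (F s) = g (F s - G) + g G := by rw [map_sub]; ring
        calc g (F s) = g (F s - G) + g G := hsplitg
          _ ≤ ‖g (F s - G)‖ + 0 := add_le_add (le_abs_self _) (hgC _ hGC)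
          _ = ‖g (F s - G)‖ := add_zero _
          _ ≤ ‖g‖ * ‖F s - G‖ := g.le_opNorm _
          _ ≤ 1 * (k (t - s) * ‖lam s - c‖) := by
              apply mul_le_mul hg1 hnd (norm_nonneg _) zero_le_one
          _ = k (t - s) * dist (lam s) c := by rw [one_mul, dist_eq_norm]
      by_cases hkz : k (t - s) = 0
      · have h1 := hall 0 h0C
        rw [hkz, zero_mul] at h1 ⊢
        exact h1
      · have hkpos : 0 < k (t - s) := lt_of_le_of_ne (hk0 _) (Ne.symm hkz)
        by_contra hcon2
        push_neg at hcon2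
        have h2 : dd s < g (F s) / k (t - s) := by
          rw [lt_div_iff₀ hkpos, mul_comm]
          exact hcon2
        obtain ⟨c, hc, hdc⟩ := (Metric.infDist_lt_iff hCne).mp h2
        have h3 := hall c hc
        rw [lt_div_iff₀ hkpos, mul_comm] at hdc
        linarith
    have hgFint : IntegrableOn (fun s => g (F s)) (Ioc 0 t) := g.integrable_comp (hFint t ht)
    have hres : volume.restrict (Ioc (0:ℝ) t) = volume.restrict (Ioo (0:ℝ) t) :=
      (Measure.restrict_congr_set Ioo_ae_eq_Ioc).symm
    have hle : ∫ s in Ioc (0:ℝ) t, g (F s) ≤ R := by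
      refine integral_mono_ae hgFint (hkd_int t ht) ?_
      have h4 : ∀ᵐ s ∂(volume.restrict (Ioo (0:ℝ) t)), g (F s) ≤ k (t - s) * dd s :=
        (ae_restrict_iff' measurableSet_Ioo).mpr (Filter.Eventually.of_forall hae)
      rw [← hres] at h4
      exact h4
    have hfinal : r ≤ R := by
      calc r ≤ g I := hgr
        _ = ∫ s in Ioc (0:ℝ) t, g (F s) := hgI
        _ ≤ R := hle
    rw [hrdef] at hfinal
    linarith
  -- conclude via Gronwall
  intro t ht
  rcases eq_or_lt_of_le ht with h | htpos
  · rw [← h, hlam0]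
    exact hx₀
  · have hint' : ∀ u ∈ Icc (0:ℝ) t, IntegrableOn (fun s => k (u - s) * dd s) (Ioc 0 u) := by
      intro u hu
      rcases eq_or_lt_of_le hu.1 with h' | hupos
      · rw [← h', Ioc_self]
        exact integrableOn_empty
      · exact hkd_int u hupos
    have hie' : ∀ u ∈ Icc (0:ℝ) t, dd u ≤ ∫ s in Ioc (0:ℝ) u, k (u - s) * dd s := by
      intro u hu
      rcases eq_or_lt_of_le hu.1 with h' | hupos
      · rw [← h', hdd00, Ioc_self]
        simp
      · exact keyineq u hupos
    have hz := gronwall_conv htpos k dd hk0 (hkint t htpos)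
      (hddcont.mono Icc_subset_Ici_self) hdd0 hint' hie' t ⟨ht, le_rfl⟩
    exact (IsClosed.mem_iff_infDist_zero hCclosed hCne).mpr hz


end
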